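/- For every odd n ≥ 3 and every perfect matching M of the flower snark F_n, F_n contains a DF 6-pole (the union of two consecutive SF 6-poles) that is good with respect to M, i.e. whose six boundary dangling edges meet M in exactly one left dangling edge l_j^i and the corresponding right dangling edge r_j^{i+1} for some j. -/

import Mathlib

open Finset
open scoped Classical

/-- A perfect matching of `G`, given as a finite set of edges: every vertex lies on
exactly one edge of `M`. -/
def IsPM {V : Type*} (G : SimpleGraph V) (M : Finset (Sym2 V)) : Prop :=
  (∀ e ∈ M, e ∈ G.edgeSet) ∧ ∀ v : V, (M.filter (fun e => v ∈ e)).card = 1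

/-- The multigraph obtained from the cubic graph `G` by adding `m e` parallel copies of
each edge `e` is Class I with `c` colours; equivalently (since that multigraph is regular)
its edge multiset decomposes into `c` perfect matchings of `G`. -/
def ClassIPlus {V : Type*} (G : SimpleGraph V) (m : Sym2 V → ℕ) (c : ℕ) : Prop :=
  ∃ F : Fin c → Finset (Sym2 V), (∀ i, IsPM G (F i)) ∧
    ∀ e ∈ G.edgeSet, (Finset.univ.filter (fun i => e ∈ F i)).card = 1 + m e

/-- The set of `k` for which some `k` perfect matchings added to `G` give a Class I
multigraph. -/
def lSet {V : Type*} (G : SimpleGraph V) : Set ℕ :=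
  {k | ∃ M : Fin k → Finset (Sym2 V), (∀ i, IsPM G (M i)) ∧
    ClassIPlus G (fun e => (Finset.univ.filter (fun i => e ∈ M i)).card) (k + 3)}

/-- `l(G)`: the minimum number of perfect matchings to add to `G` to get a Class I
multigraph (`⊤` if impossible). -/
noncomputable def lVal {V : Type*} (G : SimpleGraph V) : ℕ∞ :=
  sInf ((fun k : ℕ => (k : ℕ∞)) '' lSet G)

/-- The perfect matching index (excessive index) of `G`. -/
noncomputable def pmIndex {V : Type*} (G : SimpleGraph V) : ℕ∞ :=
  sInf ((fun k : ℕ => (k : ℕ∞)) '' {k | ∃ F : Fin k → Finset (Sym2 V),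
    (∀ i, IsPM G (F i)) ∧ ∀ e ∈ G.edgeSet, ∃ i, e ∈ F i})

/-- `G` is cubic (3-regular). -/
def IsCubic {V : Type*} [Fintype V] (G : SimpleGraph V) : Prop := ∀ v, G.degree v = 3

/-- `G` is bridgeless. -/
def IsBridgeless {V : Type*} (G : SimpleGraph V) : Prop := ∀ e ∈ G.edgeSet, ¬ G.IsBridge e

/-- The flower snark `F n` (`n` odd).  Block `i` is an SF 6-pole with four vertices:
the hub `(i,0)`, joined by the spoke to `(i,1)` and by the two other internal edges to
`(i,2)` and `(i,3)`.  The dangling edges of block `i` are realised by joining each right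
dangling edge `r_j^i` to the left dangling edge `l_j^{i+1}`: `(i,1)-(i+1,1)` (j = 1),
`(i,3)-(i+1,2)` (j = 2) and `(i,2)-(i+1,3)` (j = 3). -/
def flowerSnark (n : ℕ) [NeZero n] : SimpleGraph (Fin n × Fin 4) :=
  SimpleGraph.fromRel (fun p q =>
    (p.1 = q.1 ∧ p.2 = 0 ∧ q.2 ≠ 0) ∨
    (q.1 = p.1 + 1 ∧ ((p.2 = 1 ∧ q.2 = 1) ∨ (p.2 = 3 ∧ q.2 = 2) ∨ (p.2 = 2 ∧ q.2 = 3))))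

/-- The `j`-th left dangling edge `l_j^i` of the SF 6-pole `F_i` of the flower snark,
as an edge of the whole graph (joined with `r_j^{i-1}`). -/
def leftEdge (n : ℕ) [NeZero n] (i : Fin n) (j : Fin 3) : Sym2 (Fin n × Fin 4) :=
  if j = 0 then s((i - 1, 1), (i, 1))
  else if j = 1 then s((i - 1, 3), (i, 2))
  else s((i - 1, 2), (i, 3))

open Fin.CommRing

namespace FSAux

variable {n : ℕ} [NeZero n]

theorem one_ne (h3 : 3 ≤ n) : (1 : Fin n) ≠ 0 := by
  intro h2
  have h4 : ((1:ℕ) : Fin n) = 0 := by exact_mod_cast h2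
  rw [Fin.natCast_eq_zero] at h4
  have := Nat.le_of_dvd (by norm_num) h4
  omega

theorem two_ne (h3 : 3 ≤ n) : (2 : Fin n) ≠ 0 := by
  intro h2
  have h4 : ((2:ℕ) : Fin n) = 0 := by exact_mod_cast h2
  rw [Fin.natCast_eq_zero] at h4
  have := Nat.le_of_dvd (by norm_num) h4
  omega

theorem fin_aux (h3 : 3 ≤ n) (i q1 : Fin n) :
    ¬i = q1 ∧ (q1 = i + 1 ∨ i = q1 + 1) ↔ q1 = i - 1 ∨ q1 = i + 1 := by
  have h1 := one_ne h3
  constructor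
  · rintro ⟨hne, h | h⟩
    · right; exact h
    · left; rw [eq_sub_iff_add_eq]; exact h.symm
  · rintro (h | h)
    · refine ⟨fun he => ?_, Or.inr ?_⟩
      · rw [h] at he
        exact h1 (left_eq_add.mp (sub_eq_iff_eq_add.mp he.symm))
      · rw [h, sub_add_cancel]
    · subst h
      exact ⟨fun he => h1 (left_eq_add.mp he), Or.inl rfl⟩


theorem fin_aux2 (i q1 : Fin n) :
    q1 = i + 1 ∨ i = q1 + 1 ↔ q1 = i - 1 ∨ q1 = i + 1 := by
  constructor
  · rintro (h | h)
    · right; exact h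
    · left; rw [eq_sub_iff_add_eq]; exact h.symm
  · rintro (h | h)
    · right; rw [h, sub_add_cancel]
    · left; exact h

theorem adj0 (h3 : 3 ≤ n) (i : Fin n) (q : Fin n × Fin 4) :
    (flowerSnark n).Adj (i,0) q ↔ q = (i,1) ∨ q = (i,2) ∨ q = (i,3) := by
  obtain ⟨q1,q2⟩ := q
  fin_cases q2 <;>
    simp only [flowerSnark, SimpleGraph.fromRel_adj, Prod.ext_iff] <;>
    simp (config := { decide := true }) [Fin.ext_iff (n := 4), eq_comm]

theorem adj1 (h3 : 3 ≤ n) (i : Fin n) (q : Fin n × Fin 4) :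
    (flowerSnark n).Adj (i,1) q ↔ q = (i,0) ∨ q = (i-1,1) ∨ q = (i+1,1) := by
  obtain ⟨q1,q2⟩ := q
  fin_cases q2 <;>
    simp only [flowerSnark, SimpleGraph.fromRel_adj, Prod.ext_iff] <;>
    simp (config := { decide := true }) [Fin.ext_iff (n := 4), eq_comm]
  exact fin_aux h3 i q1

theorem adj2 (h3 : 3 ≤ n) (i : Fin n) (q : Fin n × Fin 4) :
    (flowerSnark n).Adj (i,2) q ↔ q = (i,0) ∨ q = (i-1,3) ∨ q = (i+1,3) := by
  obtain ⟨q1,q2⟩ := q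
  fin_cases q2 <;>
    simp only [flowerSnark, SimpleGraph.fromRel_adj, Prod.ext_iff] <;>
    simp (config := { decide := true }) [Fin.ext_iff (n := 4), eq_comm]
  exact fin_aux2 i q1

theorem adj3 (h3 : 3 ≤ n) (i : Fin n) (q : Fin n × Fin 4) :
    (flowerSnark n).Adj (i,3) q ↔ q = (i,0) ∨ q = (i-1,2) ∨ q = (i+1,2) := by
  obtain ⟨q1,q2⟩ := q
  fin_cases q2 <;>
    simp only [flowerSnark, SimpleGraph.fromRel_adj, Prod.ext_iff] <;>
    simp (config := { decide := true }) [Fin.ext_iff (n := 4), eq_comm]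
  exact fin_aux2 i q1

end FSAux

namespace FSAux

variable {n : ℕ} [NeZero n]

theorem le0 (i : Fin n) : leftEdge n i 0 = s((i - 1, 1), (i, 1)) := by simp [leftEdge]
theorem le1 (i : Fin n) : leftEdge n i 1 = s((i - 1, 3), (i, 2)) := by simp [leftEdge]
theorem le2 (i : Fin n) : leftEdge n i 2 = s((i - 1, 2), (i, 3)) := by simp [leftEdge]

theorem ne_add_one (h3 : 3 ≤ n) (i : Fin n) : i ≠ i + 1 :=
  fun h => one_ne h3 (left_eq_add.mp h)

theorem sub_one_ne (h3 : 3 ≤ n) (i : Fin n) : i - 1 ≠ i := by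
  intro h
  exact one_ne h3 (left_eq_add.mp (sub_eq_iff_eq_add.mp h))

theorem sub_one_ne_add_one (h3 : 3 ≤ n) (i : Fin n) : i - 1 ≠ i + 1 := by
  intro h
  have h2 : i = i + (1 + 1) := by
    rw [← add_assoc]
    exact sub_eq_iff_eq_add.mp h
  have := left_eq_add.mp h2
  rw [one_add_one_eq_two] at this
  exact two_ne h3 this

theorem cover_aux (M : Finset (Sym2 (Fin n × Fin 4))) (hM : IsPM (flowerSnark n) M)
    (v : Fin n × Fin 4) (e : Sym2 (Fin n × Fin 4)) (heM : e ∈ M) (hv : v ∈ e) :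
    ∃ w, (flowerSnark n).Adj v w ∧ e = s(v, w) := by
  have hE := hM.1 e heM
  induction e using Sym2.ind with
  | _ a b =>
    rw [SimpleGraph.mem_edgeSet] at hE
    rcases Sym2.mem_iff.mp hv with rfl | rfl
    · exact ⟨b, hE, rfl⟩
    · exact ⟨a, hE.symm, Sym2.eq_swap⟩

theorem exactOne (M : Finset (Sym2 (Fin n × Fin 4))) (hM : IsPM (flowerSnark n) M)
    (v : Fin n × Fin 4) (e1 e2 e3 : Sym2 (Fin n × Fin 4))
    (hv1 : v ∈ e1) (hv2 : v ∈ e2) (hv3 : v ∈ e3)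
    (d12 : e1 ≠ e2) (d13 : e1 ≠ e3) (d23 : e2 ≠ e3)
    (hcov : ∀ e ∈ M, v ∈ e → e = e1 ∨ e = e2 ∨ e = e3) :
    (if e1 ∈ M then 1 else 0) + (if e2 ∈ M then 1 else 0) + (if e3 ∈ M then 1 else 0) = 1 := by
  obtain ⟨e, he⟩ := Finset.card_eq_one.mp (hM.2 v)
  rw [Finset.eq_singleton_iff_unique_mem] at he
  obtain ⟨he1, he2⟩ := he
  simp only [Finset.mem_filter] at he1
  have key : ∀ f, v ∈ f → (f ∈ M ↔ f = e) := by
    intro f hf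
    constructor
    · intro hfM
      exact he2 f (by simp only [Finset.mem_filter]; exact ⟨hfM, hf⟩)
    · rintro rfl; exact he1.1
  rcases hcov e he1.1 he1.2 with h | h | h <;>
    simp [key e1 hv1, key e2 hv2, key e3 hv3, h, d12, d13, d23,
      Ne.symm d12, Ne.symm d13, Ne.symm d23]

end FSAux
namespace FSAux

variable {n : ℕ} [NeZero n]

theorem le0' (i : Fin n) : leftEdge n (i+1) 0 = s((i, 1), (i+1, 1)) := by
  rw [le0, add_sub_cancel_right]
theorem le1' (i : Fin n) : leftEdge n (i+1) 1 = s((i, 3), (i+1, 2)) := by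
  rw [le1, add_sub_cancel_right]
theorem le2' (i : Fin n) : leftEdge n (i+1) 2 = s((i, 2), (i+1, 3)) := by
  rw [le2, add_sub_cancel_right]

theorem blockCore (h3 : 3 ≤ n) (M : Finset (Sym2 (Fin n × Fin 4)))
    (hM : IsPM (flowerSnark n) M) (i : Fin n) :
    (if s((i,0),(i,1)) ∈ M then 1 else 0) + (if s((i,0),(i,2)) ∈ M then 1 else 0)
      + (if s((i,0),(i,3)) ∈ M then 1 else 0) = 1 ∧
    (if s((i,0),(i,1)) ∈ M then 1 else 0) + (if leftEdge n i 0 ∈ M then 1 else 0)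
      + (if leftEdge n (i+1) 0 ∈ M then 1 else 0) = 1 ∧
    (if s((i,0),(i,2)) ∈ M then 1 else 0) + (if leftEdge n i 1 ∈ M then 1 else 0)
      + (if leftEdge n (i+1) 2 ∈ M then 1 else 0) = 1 ∧
    (if s((i,0),(i,3)) ∈ M then 1 else 0) + (if leftEdge n i 2 ∈ M then 1 else 0)
      + (if leftEdge n (i+1) 1 ∈ M then 1 else 0) = 1 := by
  have hs1 := sub_one_ne h3 i
  have hs2 := ne_add_one h3 i
  have hs3 := sub_one_ne_add_one h3 i
  refine ⟨?_, ?_, ?_, ?_⟩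
  · refine exactOne M hM (i,0) _ _ _ (Sym2.mem_mk_left _ _) (Sym2.mem_mk_left _ _)
      (Sym2.mem_mk_left _ _) ?_ ?_ ?_ ?_
    · simp (config := { decide := true }) [Sym2.eq_iff, Prod.ext_iff, Fin.ext_iff (n := 4)]
    · simp (config := { decide := true }) [Sym2.eq_iff, Prod.ext_iff, Fin.ext_iff (n := 4)]
    · simp (config := { decide := true }) [Sym2.eq_iff, Prod.ext_iff, Fin.ext_iff (n := 4)]
    · intro e heM hev
      obtain ⟨w, hw, rfl⟩ := cover_aux M hM _ e heM hev
      rw [adj0 h3] at hw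
      rcases hw with rfl | rfl | rfl
      · exact Or.inl rfl
      · exact Or.inr (Or.inl rfl)
      · exact Or.inr (Or.inr rfl)
  · rw [le0, le0']
    refine exactOne M hM (i,1) _ _ _ (Sym2.mem_mk_right _ _) (Sym2.mem_mk_right _ _)
      (Sym2.mem_mk_left _ _) ?_ ?_ ?_ ?_
    · simp (config := { decide := true }) [Sym2.eq_iff, Prod.ext_iff, Fin.ext_iff (n := 4)]
    · simp (config := { decide := true }) [Sym2.eq_iff, Prod.ext_iff, Fin.ext_iff (n := 4)]
    · simp (config := { decide := true }) [Sym2.eq_iff, Prod.ext_iff, Fin.ext_iff (n := 4),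
        hs1, hs2, hs3]
    · intro e heM hev
      obtain ⟨w, hw, rfl⟩ := cover_aux M hM _ e heM hev
      rw [adj1 h3] at hw
      rcases hw with rfl | rfl | rfl
      · exact Or.inl Sym2.eq_swap
      · exact Or.inr (Or.inl Sym2.eq_swap)
      · exact Or.inr (Or.inr rfl)
  · rw [le1, le2']
    refine exactOne M hM (i,2) _ _ _ (Sym2.mem_mk_right _ _) (Sym2.mem_mk_right _ _)
      (Sym2.mem_mk_left _ _) ?_ ?_ ?_ ?_
    · simp (config := { decide := true }) [Sym2.eq_iff, Prod.ext_iff, Fin.ext_iff (n := 4)]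
    · simp (config := { decide := true }) [Sym2.eq_iff, Prod.ext_iff, Fin.ext_iff (n := 4)]
    · simp (config := { decide := true }) [Sym2.eq_iff, Prod.ext_iff, Fin.ext_iff (n := 4),
        hs1, hs2, hs3]
    · intro e heM hev
      obtain ⟨w, hw, rfl⟩ := cover_aux M hM _ e heM hev
      rw [adj2 h3] at hw
      rcases hw with rfl | rfl | rfl
      · exact Or.inl Sym2.eq_swap
      · exact Or.inr (Or.inl Sym2.eq_swap)
      · exact Or.inr (Or.inr rfl)
  · rw [le2, le1']
    refine exactOne M hM (i,3) _ _ _ (Sym2.mem_mk_right _ _) (Sym2.mem_mk_right _ _)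
      (Sym2.mem_mk_left _ _) ?_ ?_ ?_ ?_
    · simp (config := { decide := true }) [Sym2.eq_iff, Prod.ext_iff, Fin.ext_iff (n := 4)]
    · simp (config := { decide := true }) [Sym2.eq_iff, Prod.ext_iff, Fin.ext_iff (n := 4)]
    · simp (config := { decide := true }) [Sym2.eq_iff, Prod.ext_iff, Fin.ext_iff (n := 4),
        hs1, hs2, hs3]
    · intro e heM hev
      obtain ⟨w, hw, rfl⟩ := cover_aux M hM _ e heM hev
      rw [adj3 h3] at hw
      rcases hw with rfl | rfl | rfl
      · exact Or.inl Sym2.eq_swap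
      · exact Or.inr (Or.inl Sym2.eq_swap)
      · exact Or.inr (Or.inr rfl)

end FSAux
namespace FSAux

variable {n : ℕ} [NeZero n]

noncomputable def cnt (M : Finset (Sym2 (Fin n × Fin 4))) (i : Fin n) : ℕ :=
  (if leftEdge n i 0 ∈ M then 1 else 0) + (if leftEdge n i 1 ∈ M then 1 else 0)
    + (if leftEdge n i 2 ∈ M then 1 else 0)

theorem cnt_add (h3 : 3 ≤ n) (M : Finset (Sym2 (Fin n × Fin 4)))
    (hM : IsPM (flowerSnark n) M) (i : Fin n) : cnt M i + cnt M (i+1) = 2 := by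
  obtain ⟨e0, e1, e2, e3⟩ := blockCore h3 M hM i
  unfold cnt
  omega

theorem cnt_one (h3 : 3 ≤ n) (hodd : Odd n) (M : Finset (Sym2 (Fin n × Fin 4)))
    (hM : IsPM (flowerSnark n) M) (i : Fin n) : cnt M i = 1 := by
  set B : ℕ → ℕ := fun k => cnt M (k : Fin n) with hB
  have hcast : ∀ k : ℕ, ((k+1 : ℕ) : Fin n) = (k : Fin n) + 1 := by
    intro k; push_cast; ring
  have hadd : ∀ k : ℕ, B k + B (k+1) = 2 := by
    intro k
    have := cnt_add h3 M hM (k : Fin n)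
    simpa [hB, hcast k] using this
  have heven : ∀ k : ℕ, B (2*k) = B 0 := by
    intro k
    induction k with
    | zero => rfl
    | succ m ih =>
      have h1 := hadd (2*m)
      have h2 := hadd (2*m+1)
      have : 2*(m+1) = 2*m+1+1 := by ring
      rw [this]
      omega
  have hall : ∀ k : ℕ, B k = 1 := by
    obtain ⟨m, hm⟩ := hodd
    have hn0 : B n = B 0 := by
      have : ((n : ℕ) : Fin n) = (0 : Fin n) := by simp
      simp [hB, this]
    have h2m : B (2*m) = B 0 := heven m
    have hb0 : B 0 = 1 := by
      have := hadd (2*m)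
      rw [hm] at hn0
      omega
    intro k
    rcases Nat.even_or_odd k with ⟨l, hl⟩ | ⟨l, hl⟩
    · subst hl
      have h5 := heven l
      rw [two_mul] at h5
      omega
    · subst hl
      have h5 := heven l
      have h6 := hadd (2*l)
      omega
  have : cnt M i = B i.val := by simp [hB, Fin.cast_val_eq_self]
  rw [this, hall]

noncomputable def col (M : Finset (Sym2 (Fin n × Fin 4))) (i : Fin n) : Fin 3 :=
  if leftEdge n i 0 ∈ M then 0 else if leftEdge n i 1 ∈ M then 1 else 2

theorem col_spec (h3 : 3 ≤ n) (hodd : Odd n) (M : Finset (Sym2 (Fin n × Fin 4)))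
    (hM : IsPM (flowerSnark n) M) (i : Fin n) :
    ∀ j : Fin 3, leftEdge n i j ∈ M ↔ j = col M i := by
  have h := cnt_one h3 hodd M hM i
  unfold cnt at h
  intro j
  by_cases h0 : leftEdge n i 0 ∈ M <;> by_cases h1 : leftEdge n i 1 ∈ M <;>
    by_cases h2 : leftEdge n i 2 ∈ M <;>
    simp only [h0, h1, h2, if_true, if_false, if_pos, if_neg, not_false_iff] at h <;>
    first
      | omega
      | (fin_cases j <;> simp (config := { decide := true }) [col, h0, h1, h2])

theorem noBad (h3 : 3 ≤ n) (hodd : Odd n) (M : Finset (Sym2 (Fin n × Fin 4)))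
    (hM : IsPM (flowerSnark n) M) (i : Fin n) :
    ¬(col M i = 0 ∧ col M (i+1) = 0) ∧ ¬(col M i = 1 ∧ col M (i+1) = 2)
      ∧ ¬(col M i = 2 ∧ col M (i+1) = 1) := by
  obtain ⟨e0, e1, e2, e3⟩ := blockCore h3 M hM i
  have f1 := col_spec h3 hodd M hM i
  have f2 := col_spec h3 hodd M hM (i+1)
  refine ⟨fun ⟨ha, hb⟩ => ?_, fun ⟨ha, hb⟩ => ?_, fun ⟨ha, hb⟩ => ?_⟩
  · rw [if_pos ((f1 0).mpr ha.symm), if_pos ((f2 0).mpr hb.symm)] at e1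
    omega
  · rw [if_pos ((f1 1).mpr ha.symm), if_pos ((f2 2).mpr hb.symm)] at e2
    omega
  · rw [if_pos ((f1 2).mpr ha.symm), if_pos ((f2 1).mpr hb.symm)] at e3
    omega

def g3 : Fin 3 → Fin 3 → ZMod 6 := fun a b =>
  if a = 0 ∧ b = 1 then 0 else if a = 1 ∧ b = 1 then 1 else if a = 1 ∧ b = 0 then 2
  else if a = 0 ∧ b = 2 then 3 else if a = 2 ∧ b = 2 then 4 else 5

theorem g3_step : ∀ a b c : Fin 3, ¬(a=0∧b=0) → ¬(a=1∧b=2) → ¬(a=2∧b=1) →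
    ¬(b=0∧c=0) → ¬(b=1∧c=2) → ¬(b=2∧c=1) → c ≠ a → g3 b c = g3 a b + 1 := by decide

end FSAux


/-- For every odd `n ≥ 3` and every perfect matching `M` of the flower snark `F n`,
some DF 6-pole (two consecutive SF 6-poles `F_i`, `F_{i+1}`) is good with respect to
`M`: its boundary meets `M` exactly in the two edges `l_j^i` and `r_j^{i+1} = l_j^{i+2}`
for some `j`. -/
theorem stmt12 (n : ℕ) [NeZero n] (hodd : Odd n) (h3 : 3 ≤ n)
    (M : Finset (Sym2 (Fin n × Fin 4))) (hM : IsPM (flowerSnark n) M) :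
    ∃ (i : Fin n) (j : Fin 3), ∀ j' : Fin 3,
      (leftEdge n i j' ∈ M ↔ j' = j) ∧ (leftEdge n (i + 2) j' ∈ M ↔ j' = j) := by
  suffices hgood : ∃ i : Fin n, FSAux.col M (i+2) = FSAux.col M i by
    obtain ⟨i, hi⟩ := hgood
    refine ⟨i, FSAux.col M i, fun j' => ⟨?_, ?_⟩⟩
    · exact FSAux.col_spec h3 hodd M hM i j'
    · rw [FSAux.col_spec h3 hodd M hM (i+2) j', hi]
  by_contra hne
  push_neg at hne
  set C : ℕ → Fin 3 := fun k => FSAux.col M (k : Fin n) with hC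
  have hstep : ∀ k : ℕ, FSAux.g3 (C (k+1)) (C (k+2)) = FSAux.g3 (C k) (C (k+1)) + 1 := by
    intro k
    have hb1 := FSAux.noBad h3 hodd M hM (k : Fin n)
    have hb2 := FSAux.noBad h3 hodd M hM ((k : Fin n) + 1)
    have hne' := hne ((k : Fin n))
    have e1 : C (k+1) = FSAux.col M ((k : Fin n)+1) := by
      have : ((k+1:ℕ) : Fin n) = (k : Fin n)+1 := by push_cast; ring
      simp [hC, this]
    have e2 : C (k+2) = FSAux.col M ((k : Fin n)+2) := by
      have : ((k+2:ℕ) : Fin n) = (k : Fin n)+2 := by push_cast; ring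
      simp [hC, this]
    have e3 : (k : Fin n) + 1 + 1 = (k : Fin n) + 2 := by ring
    rw [e3] at hb2
    rw [e1, e2]
    show FSAux.g3 (FSAux.col M ((k : Fin n)+1)) (FSAux.col M ((k : Fin n)+2))
      = FSAux.g3 (FSAux.col M (k : Fin n)) (FSAux.col M ((k : Fin n)+1)) + 1
    exact FSAux.g3_step _ _ _ hb1.1 hb1.2.1 hb1.2.2 hb2.1 hb2.2.1 hb2.2.2 hne'
  have hiter : ∀ k : ℕ, FSAux.g3 (C k) (C (k+1)) = FSAux.g3 (C 0) (C 1) + k := by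
    intro k
    induction k with
    | zero => simp
    | succ m ih =>
      rw [hstep m, ih]
      push_cast
      ring
  have hn1 : C n = C 0 := by simp [hC]
  have hn2 : C (n+1) = C 1 := by
    have h : ((n+1 : ℕ) : Fin n) = ((1:ℕ) : Fin n) := by push_cast; simp
    simp [hC, h]
  have hfin := hiter n
  rw [hn1, hn2] at hfin
  have h0 : ((n : ℕ) : ZMod 6) = 0 := (left_eq_add.mp hfin)
  have h6 : (6:ℕ) ∣ n := (ZMod.natCast_eq_zero_iff n 6).mp h0
  obtain ⟨m, hm⟩ := hodd
  omega
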